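/- arXiv:1211.4300 — 11 statements merged into one kernel-verified Lean document; each statement's English description precedes it below -/
import Mathlib

section
/- Let η : F → H be an almost G-homomorphism and set N := R ∩ ker η (a normal subgroup of F). Then the image of R in the quotient F/N is contained in the center of F/N, the map induced by η restricts to a group isomorphism from this image onto η(R), and the quotient of F/N by this image is isomorphic to G = F/R. In other words, F/(R ∩ ker η) is a central extension of G by a group isomorphic to η(R). -/
/-- Let `F` be a group, `R` a normal subgroup of `F`, `G := F/R`, and let
`η : F →* H` be an almost `G`-homomorphism (i.e. `η(R)` is contained in the center of
`η(F)`).  Set `N := R ⊓ ker η`.  Then the image `Rbar` of `R` in `F ⧸ N` is contained in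
the center of `F ⧸ N`, the map induced by `η` restricts to a group isomorphism from
`Rbar` onto `η(R)`, and the quotient of `F ⧸ N` by `Rbar` is isomorphic to `G = F ⧸ R`. -/
theorem almostHom_quotient_is_central_extension
    {F H : Type*} [Group F] [Group H]
    (R : Subgroup F) [R.Normal] (η : F →* H)
    (halmost : ∀ r ∈ R, ∀ f : F, η r * η f = η f * η r)
    (N : Subgroup F) (hN : N = R ⊓ η.ker) [N.Normal]
    (Rbar : Subgroup (F ⧸ N)) (hRbar : Rbar = R.map (QuotientGroup.mk' N)) [Rbar.Normal] :
    Rbar ≤ Subgroup.center (F ⧸ N) ∧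
    (∃ e : Rbar ≃* R.map η,
      ∀ (r : F) (hr : r ∈ R) (hx : (QuotientGroup.mk r : F ⧸ N) ∈ Rbar),
        (e ⟨QuotientGroup.mk r, hx⟩ : H) = η r) ∧
    ∃ e' : (F ⧸ N) ⧸ Rbar ≃* F ⧸ R,
      ∀ f : F, e' (QuotientGroup.mk (QuotientGroup.mk f)) = QuotientGroup.mk f := by
  have hNleR : N ≤ R := hN ▸ inf_le_left
  have hNker : N ≤ η.ker := hN ▸ inf_le_right
  -- η factors through F ⧸ N
  refine ⟨?_, ?_, ?_⟩
  · -- centrality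
    intro x hx
    rw [hRbar] at hx
    obtain ⟨r, hr, rfl⟩ := hx
    rw [Subgroup.mem_center_iff]
    intro y
    induction y using QuotientGroup.induction_on with
    | H f =>
      have hr' : r ∈ R := hr
      show ((f * r : F) : F ⧸ N) = ((r * f : F) : F ⧸ N)
      rw [QuotientGroup.eq]
      have hmemR : (f * r)⁻¹ * (r * f) ∈ R := by
        have h2 : (f * r)⁻¹ * (r * f) = r⁻¹ * (f⁻¹ * r * f) := by group
        rw [h2]
        exact mul_mem (inv_mem hr')
          (by simpa [mul_assoc] using Subgroup.Normal.conj_mem ‹R.Normal› r hr' f⁻¹)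
      have hker : (f * r)⁻¹ * (r * f) ∈ η.ker := by
        rw [MonoidHom.mem_ker]
        simp only [map_mul, map_inv]
        rw [halmost r hr' f]
        group
      rw [hN]
      exact Subgroup.mem_inf.mpr ⟨hmemR, hker⟩
  · -- isomorphism Rbar ≃* η(R)
    let ηbar : F ⧸ N →* H := QuotientGroup.lift N η fun n hn => hNker hn
    have hηbar : ∀ f : F, ηbar (QuotientGroup.mk f) = η f := fun f => rfl
    have hmaps : ∀ x ∈ Rbar, ηbar x ∈ R.map η := by
      intro x hx
      rw [hRbar] at hx
      obtain ⟨r, hr, rfl⟩ := hx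
      exact ⟨r, hr, rfl⟩
    let φ : Rbar →* R.map η := MonoidHom.mk'
      (fun x => ⟨ηbar x, hmaps x x.2⟩)
      (by intro a b; ext; simp)
    have hinj : Function.Injective φ := by
      intro a b hab
      have h1 : ηbar a = ηbar b := congrArg Subtype.val hab
      ext
      obtain ⟨x, hx⟩ := a
      obtain ⟨y, hy⟩ := b
      rw [hRbar] at hx hy
      obtain ⟨r, hr, rfl⟩ := hx
      obtain ⟨s, hs, rfl⟩ := hy
      have hr' : r ∈ R := hr
      have hs' : s ∈ R := hs
      show ((r : F) : F ⧸ N) = ((s : F) : F ⧸ N)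
      rw [QuotientGroup.eq, hN]
      have hker : r⁻¹ * s ∈ η.ker := by
        rw [MonoidHom.mem_ker, map_mul, map_inv]
        have h3 : η r = η s := h1
        rw [h3]; group
      exact Subgroup.mem_inf.mpr ⟨mul_mem (inv_mem hr') hs', hker⟩
    have hsurj : Function.Surjective φ := by
      rintro ⟨y, r, hr, rfl⟩
      refine ⟨⟨QuotientGroup.mk r, hRbar ▸ ⟨r, hr, rfl⟩⟩, rfl⟩
    exact ⟨MulEquiv.ofBijective φ ⟨hinj, hsurj⟩, fun r hr hx => rfl⟩
  · -- quotient isomorphism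
    subst hRbar
    exact ⟨QuotientGroup.quotientQuotientEquivQuotient N R hNleR, fun f => rfl⟩
end

section
/- The composite homomorphism F → F ∗ Z → (F ∗ Z)/R' (inclusion followed by the quotient map) is surjective and its kernel equals R ∩ ker η; consequently it induces a group isomorphism F/(R ∩ ker η) ≅ (F ∗ Z)/R'. -/
open Monoid

/-- The normal subgroup `R'` of the free product `F ∗ Z`: the normal closure of the set of
"lifted relations" `inl r * (inr (φ (η r)))⁻¹` for `r ∈ R`, together with the
"commuting relations" `inl f * inr z * (inl f)⁻¹ * (inr z)⁻¹` for `f ∈ F`, `z ∈ Z`. -/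
abbrev liftedRelations {F Z H : Type*} [Group F] [Group Z] [Group H]
    (R : Subgroup F) (η : F →* H) (φ : (R.map η) ≃* Z) :
    Subgroup (Coprod F Z) :=
  Subgroup.normalClosure
    ((Set.range fun r : R =>
        Coprod.inl (r : F) *
          (Coprod.inr (φ ⟨η r, Subgroup.mem_map_of_mem η r.2⟩) : Coprod F Z)⁻¹) ∪
      {x | ∃ (f : F) (z : Z),
        x = Coprod.inl f * Coprod.inr z *
            (Coprod.inl f : Coprod F Z)⁻¹ * (Coprod.inr z : Coprod F Z)⁻¹})

/-- Let `η : F →* H` be an almost `G`-homomorphism (`G = F/R`), `Z` a group,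
and `φ : η(R) ≃* Z`.  With `R'` the normal closure described above, the composite
`F →* F ∗ Z →* (F ∗ Z) ⧸ R'` is surjective and its kernel is `R ⊓ ker η`; consequently
it induces a group isomorphism `F ⧸ (R ⊓ ker η) ≃* (F ∗ Z) ⧸ R'`. -/
theorem coprod_quotient_eq_almostHom_quotient
    {F Z H : Type*} [Group F] [Group Z] [Group H]
    (R : Subgroup F) [R.Normal] (η : F →* H)
    (halmost : ∀ r ∈ R, ∀ f : F, η r * η f = η f * η r)
    (φ : (R.map η) ≃* Z) :
    Function.Surjective
      ((QuotientGroup.mk' (liftedRelations R η φ)).comp Coprod.inl) ∧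
    ((QuotientGroup.mk' (liftedRelations R η φ)).comp Coprod.inl).ker = R ⊓ η.ker ∧
    ∃ e : F ⧸ (R ⊓ η.ker) ≃* Coprod F Z ⧸ liftedRelations R η φ,
      ∀ f : F, e (QuotientGroup.mk f) = QuotientGroup.mk (Coprod.inl f) := by
  set N : Subgroup F := R ⊓ η.ker with hN
  have hNnorm : N.Normal := inferInstance
  -- the map κ : F →* quotient
  set κ : F →* Coprod F Z ⧸ liftedRelations R η φ :=
    (QuotientGroup.mk' (liftedRelations R η φ)).comp Coprod.inl with hκ
  -- construct θ : Z →* F ⧸ N with θ (φ ⟨η r, _⟩) = mk r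
  set sm : R →* R.map η := η.subgroupMap R with hsm
  have hsm_surj : Function.Surjective sm := η.subgroupMap_surjective R
  set ζ : R →* F ⧸ N := (QuotientGroup.mk' N).comp R.subtype with hζ
  have hker_le : sm.ker ≤ ζ.ker := by
    intro r hr
    have hr' : η (r : F) = 1 := congrArg Subtype.val hr
    simp only [hζ, MonoidHom.mem_ker, MonoidHom.comp_apply, QuotientGroup.mk'_apply,
      Subgroup.coe_subtype]
    rw [QuotientGroup.eq_one_iff]
    exact ⟨r.2, hr'⟩
  set e1 : R ⧸ sm.ker ≃* R.map η := QuotientGroup.quotientKerEquivOfSurjective sm hsm_surj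
    with he1
  set μ : R.map η →* F ⧸ N :=
    (QuotientGroup.lift sm.ker ζ hker_le).comp e1.symm.toMonoidHom with hμ
  have hμ_spec : ∀ r : R, μ ⟨η r, Subgroup.mem_map_of_mem η r.2⟩ = QuotientGroup.mk (r : F) := by
    intro r
    have : e1 (QuotientGroup.mk r) = ⟨η r, Subgroup.mem_map_of_mem η r.2⟩ := rfl
    have h2 : e1.symm ⟨η r, Subgroup.mem_map_of_mem η r.2⟩ = QuotientGroup.mk r := by
      rw [← this, MulEquiv.symm_apply_apply]
    simp only [hμ, MonoidHom.comp_apply, MulEquiv.coe_toMonoidHom, h2]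
    rfl
  set θ : Z →* F ⧸ N := μ.comp φ.symm.toMonoidHom with hθ
  have hθ_spec : ∀ r : R, θ (φ ⟨η r, Subgroup.mem_map_of_mem η r.2⟩)
      = QuotientGroup.mk (r : F) := by
    intro r
    simp only [hθ, MonoidHom.comp_apply, MulEquiv.coe_toMonoidHom, MulEquiv.symm_apply_apply]
    exact hμ_spec r
  have hθ_exists : ∀ z : Z, ∃ r : R, θ z = QuotientGroup.mk (r : F) := by
    intro z
    obtain ⟨x, hx⟩ := φ.surjective z
    obtain ⟨r, hr⟩ := hsm_surj x
    refine ⟨r, ?_⟩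
    have : x = ⟨η r, Subgroup.mem_map_of_mem η r.2⟩ := by
      apply Subtype.ext; exact (congrArg Subtype.val hr).symm
    rw [← hx, this, hθ_spec r]
  set π : Coprod F Z →* F ⧸ N := Coprod.lift (QuotientGroup.mk' N) θ with hπ
  -- relations die under π
  have hrel : liftedRelations R η φ ≤ π.ker := by
    apply Subgroup.normalClosure_le_normal
    rintro x (⟨r, rfl⟩ | ⟨f, z, rfl⟩)
    · simp only [SetLike.mem_coe, MonoidHom.mem_ker, hπ, map_mul, map_inv,
        Coprod.lift_apply_inl, Coprod.lift_apply_inr, hθ_spec r, QuotientGroup.mk'_apply]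
      group
    · obtain ⟨r, hr⟩ := hθ_exists z
      simp only [SetLike.mem_coe, MonoidHom.mem_ker, hπ, map_mul, map_inv,
        Coprod.lift_apply_inl, Coprod.lift_apply_inr, QuotientGroup.mk'_apply, hr]
      have hcomm : (QuotientGroup.mk f : F ⧸ N) * QuotientGroup.mk (r : F)
          = QuotientGroup.mk (r : F) * QuotientGroup.mk f := by
        rw [← QuotientGroup.mk_mul, ← QuotientGroup.mk_mul, QuotientGroup.eq,
          Subgroup.mem_inf]
        constructor
        · have h : (f * (r : F))⁻¹ * ((r : F) * f)
              = (r : F)⁻¹ * (f⁻¹ * (r : F) * f⁻¹⁻¹) := by group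
          rw [h]
          exact R.mul_mem (R.inv_mem r.2) (‹R.Normal›.conj_mem _ r.2 f⁻¹)
        · rw [MonoidHom.mem_ker]
          calc η ((f * (r : F))⁻¹ * ((r : F) * f)) = (η f * η r)⁻¹ * (η r * η f) := by
                simp [map_mul]
            _ = 1 := by rw [← halmost r r.2 f]; try group
      simp only [hcomm]
      try group
  set v : Coprod F Z ⧸ liftedRelations R η φ →* F ⧸ N :=
    QuotientGroup.lift _ π hrel with hv
  have hvκ : ∀ f : F, v (κ f) = QuotientGroup.mk f := by
    intro f
    simp [hv, hκ, hπ]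
  -- surjectivity of κ
  have hinr : ∀ z : Z, ∃ f : F, κ f = QuotientGroup.mk (Coprod.inr z) := by
    intro z
    obtain ⟨x, hx⟩ := φ.surjective z
    obtain ⟨r, hr⟩ := η.subgroupMap_surjective R x
    refine ⟨r, ?_⟩
    have hx' : φ ⟨η r, Subgroup.mem_map_of_mem η r.2⟩ = z := by
      have hx0 : (⟨η r, Subgroup.mem_map_of_mem η r.2⟩ : R.map η) = x :=
        Subtype.ext (congrArg Subtype.val hr)
      rw [hx0, hx]
    have hmem : Coprod.inl (r : F) *
        (Coprod.inr (φ ⟨η r, Subgroup.mem_map_of_mem η r.2⟩) : Coprod F Z)⁻¹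
        ∈ liftedRelations R η φ :=
      Subgroup.subset_normalClosure (Set.mem_union_left _ ⟨r, rfl⟩)
    have h1 : (QuotientGroup.mk (Coprod.inl (r : F)) :
          Coprod F Z ⧸ liftedRelations R η φ) *
        (QuotientGroup.mk (Coprod.inr (φ ⟨η r, Subgroup.mem_map_of_mem η r.2⟩)))⁻¹ = 1 := by
      rw [← QuotientGroup.mk_inv, ← QuotientGroup.mk_mul]
      exact (QuotientGroup.eq_one_iff _).mpr hmem
    have h2 : (QuotientGroup.mk (Coprod.inl (r : F)) :
          Coprod F Z ⧸ liftedRelations R η φ) = QuotientGroup.mk (Coprod.inr z) := by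
      rw [← hx']
      exact mul_inv_eq_one.mp h1
    simpa [hκ] using h2
  have hsurj : Function.Surjective κ := by
    intro q
    obtain ⟨x, rfl⟩ := QuotientGroup.mk_surjective q
    induction x using Coprod.induction_on with
    | inl f => exact ⟨f, by simp [hκ]⟩
    | inr z => exact hinr z
    | mul a b ha hb =>
      obtain ⟨fa, hfa⟩ := ha
      obtain ⟨fb, hfb⟩ := hb
      exact ⟨fa * fb, by rw [map_mul, hfa, hfb]; rfl⟩
  -- kernel
  have hker : κ.ker = N := by
    ext f
    constructor
    · intro hf
      have := hvκ f
      rw [hf, map_one] at this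
      exact (QuotientGroup.eq_one_iff f).mp this.symm
    · rintro ⟨hfR, hfk⟩
      have hη1 : η f = 1 := hfk
      have hx' : φ ⟨η ((⟨f, hfR⟩ : R) : F),
          Subgroup.mem_map_of_mem η (⟨f, hfR⟩ : R).2⟩ = 1 := by
        rw [show (⟨η ((⟨f, hfR⟩ : R) : F), Subgroup.mem_map_of_mem η (⟨f, hfR⟩ : R).2⟩ :
            R.map η) = 1 from Subtype.ext hη1, map_one]
      have hmem : Coprod.inl f ∈ liftedRelations R η φ := by
        apply Subgroup.subset_normalClosure
        apply Set.mem_union_left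
        refine ⟨⟨f, hfR⟩, ?_⟩
        show Coprod.inl f *
            (Coprod.inr (φ ⟨η ((⟨f, hfR⟩ : R) : F),
              Subgroup.mem_map_of_mem η (⟨f, hfR⟩ : R).2⟩) : Coprod F Z)⁻¹ = Coprod.inl f
        rw [hx']
        simp
      simp only [hκ, MonoidHom.mem_ker, MonoidHom.comp_apply, QuotientGroup.mk'_apply]
      exact (QuotientGroup.eq_one_iff _).mpr hmem
  refine ⟨hsurj, hker, ?_⟩
  refine ⟨(QuotientGroup.quotientMulEquivOfEq hker.symm).trans
    (QuotientGroup.quotientKerEquivOfSurjective κ hsurj), fun f => ?_⟩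
  rfl
end

section
/- The composite homomorphism Z → F ∗ Z → (F ∗ Z)/R' (inclusion followed by the quotient map) is injective. -/
open Monoid

/-- In the situation above, the composite homomorphism
`Z →* F ∗ Z →* (F ∗ Z) ⧸ R'` (inclusion followed by the quotient map) is injective. -/
theorem coprod_quotient_inr_injective
    {F Z H : Type*} [Group F] [Group Z] [Group H]
    (R : Subgroup F) [R.Normal] (η : F →* H)
    (halmost : ∀ r ∈ R, ∀ f : F, η r * η f = η f * η r)
    (φ : (R.map η) ≃* Z) :
    Function.Injective
      ((QuotientGroup.mk' (liftedRelations R η φ)).comp Coprod.inr) := by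
  set ψ : Coprod F Z →* H :=
    Coprod.lift η ((R.map η).subtype.comp φ.symm.toMonoidHom) with hψ
  have hker : liftedRelations R η φ ≤ ψ.ker := by
    apply Subgroup.normalClosure_le_normal
    rintro x (⟨r, rfl⟩ | ⟨f, z, rfl⟩)
    · simp [hψ, MonoidHom.mem_ker]
    · rw [SetLike.mem_coe, MonoidHom.mem_ker]
      simp only [hψ, map_mul, map_inv, Coprod.lift_apply_inl,
        Coprod.lift_apply_inr, MonoidHom.comp_apply, Subgroup.coe_subtype, MulEquiv.coe_toMonoidHom]
      obtain ⟨r, hr, hrz⟩ := (φ.symm z).2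
      rw [← hrz, ← halmost r hr f]
      group
  have hinj : Function.Injective
      (⇑(QuotientGroup.lift _ ψ hker) ∘
        ⇑((QuotientGroup.mk' (liftedRelations R η φ)).comp Coprod.inr)) := by
    have : ⇑(QuotientGroup.lift _ ψ hker) ∘
        ⇑((QuotientGroup.mk' (liftedRelations R η φ)).comp Coprod.inr)
        = ⇑((R.map η).subtype.comp φ.symm.toMonoidHom) := by
      ext z
      simp [hψ]
    rw [this]
    exact Subtype.val_injective.comp φ.symm.injective
  exact hinj.of_comp
end

section
/- The image of Z in (F ∗ Z)/R' under the composite Z → F ∗ Z → (F ∗ Z)/R' is contained in the center of (F ∗ Z)/R', and the quotient of (F ∗ Z)/R' by this image is isomorphic to G = F/R; thus (F ∗ Z)/R' is a central extension of G. -/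
open Monoid

/-- In the situation above, the image of `Z` in `(F ∗ Z) ⧸ R'` under the
composite `Z →* F ∗ Z →* (F ∗ Z) ⧸ R'` is contained in the center of `(F ∗ Z) ⧸ R'`, and
the quotient of `(F ∗ Z) ⧸ R'` by this image is isomorphic to `G = F ⧸ R`; thus
`(F ∗ Z) ⧸ R'` is a central extension of `G`. -/
theorem coprod_quotient_is_central_extension
    {F Z H : Type*} [Group F] [Group Z] [Group H]
    (R : Subgroup F) [R.Normal] (η : F →* H)
    (halmost : ∀ r ∈ R, ∀ f : F, η r * η f = η f * η r)
    (φ : (R.map η) ≃* Z)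
    [(((QuotientGroup.mk' (liftedRelations R η φ)).comp Coprod.inr).range).Normal] :
    ((QuotientGroup.mk' (liftedRelations R η φ)).comp Coprod.inr).range
        ≤ Subgroup.center (Coprod F Z ⧸ liftedRelations R η φ) ∧
    ∃ e : (Coprod F Z ⧸ liftedRelations R η φ) ⧸
            ((QuotientGroup.mk' (liftedRelations R η φ)).comp Coprod.inr).range ≃* F ⧸ R,
      ∀ f : F,
        e (QuotientGroup.mk (QuotientGroup.mk (Coprod.inl f))) = QuotientGroup.mk f := by
  set N := liftedRelations R η φ with hN
  -- Z is abelian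
  have hZab : ∀ z z' : Z, z * z' = z' * z := by
    intro z z'
    have h : φ.symm z * φ.symm z' = φ.symm z' * φ.symm z := by
      obtain ⟨a, ha⟩ := φ.symm z
      obtain ⟨b, hb⟩ := φ.symm z'
      obtain ⟨r, hr, hr'⟩ := ha
      obtain ⟨s, hs, hs'⟩ := hb
      ext
      simp only [Subgroup.coe_mul]
      rw [← hr', ← hs']
      exact halmost r hr s
    calc z * z' = φ (φ.symm z * φ.symm z') := by simp
    _ = φ (φ.symm z' * φ.symm z) := by rw [h]
    _ = z' * z := by simp
  -- commutation relations hold in the quotient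
  have hcomm : ∀ (f : F) (z : Z),
      (QuotientGroup.mk (Coprod.inl f) : Coprod F Z ⧸ N) * QuotientGroup.mk (Coprod.inr z)
        = QuotientGroup.mk (Coprod.inr z) * QuotientGroup.mk (Coprod.inl f) := by
    intro f z
    have hmem : Coprod.inl f * Coprod.inr z *
        (Coprod.inl f : Coprod F Z)⁻¹ * (Coprod.inr z : Coprod F Z)⁻¹ ∈ N :=
      Subgroup.subset_normalClosure (Or.inr ⟨f, z, rfl⟩)
    have h1 : (QuotientGroup.mk (Coprod.inl f * Coprod.inr z *
        (Coprod.inl f : Coprod F Z)⁻¹ * (Coprod.inr z : Coprod F Z)⁻¹) : Coprod F Z ⧸ N) = 1 :=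
      (QuotientGroup.eq_one_iff _).mpr hmem
    rw [QuotientGroup.mk_mul, QuotientGroup.mk_mul, QuotientGroup.mk_mul] at h1
    simp only [QuotientGroup.mk_inv] at h1
    exact (commutatorElement_eq_one_iff_mul_comm.mp h1)
  have hrel : ∀ r : R, (QuotientGroup.mk (Coprod.inl (r : F)) : Coprod F Z ⧸ N)
      = QuotientGroup.mk (Coprod.inr (φ ⟨η r, Subgroup.mem_map_of_mem η r.2⟩)) := by
    intro r
    have hmem : Coprod.inl (r : F) *
        (Coprod.inr (φ ⟨η r, Subgroup.mem_map_of_mem η r.2⟩) : Coprod F Z)⁻¹ ∈ N :=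
      Subgroup.subset_normalClosure (Or.inl ⟨r, rfl⟩)
    have h1 := (QuotientGroup.eq_one_iff _).mpr hmem
    rw [QuotientGroup.mk_mul, QuotientGroup.mk_inv] at h1
    exact mul_inv_eq_one.mp h1
  -- centrality
  have hcentral : (((QuotientGroup.mk' N).comp Coprod.inr).range : Subgroup (Coprod F Z ⧸ N))
      ≤ Subgroup.center (Coprod F Z ⧸ N) := by
    rintro x ⟨z, rfl⟩
    rw [Subgroup.mem_center_iff]
    intro g
    induction g using QuotientGroup.induction_on with
    | H w =>
      simp only [MonoidHom.comp_apply, QuotientGroup.mk'_apply]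
      induction w using Coprod.induction_on with
      | inl f => exact hcomm f z
      | inr z' =>
        rw [← QuotientGroup.mk_mul, ← QuotientGroup.mk_mul, ← map_mul, ← map_mul, hZab]
      | mul a b ha hb =>
        rw [QuotientGroup.mk_mul, mul_assoc, hb, ← mul_assoc, ha, mul_assoc]
  refine ⟨hcentral, ?_⟩
  -- forward map
  set π : Coprod F Z →* F ⧸ R := Coprod.lift (QuotientGroup.mk' R) 1 with hπ
  have hNker : N ≤ π.ker := by
    apply Subgroup.normalClosure_le_normal
    rintro x (⟨r, rfl⟩ | ⟨f, z, rfl⟩)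
    · simp [π, MonoidHom.mem_ker, QuotientGroup.eq_one_iff, r.2]
    · simp [π, MonoidHom.mem_ker, QuotientGroup.eq_one_iff, mul_assoc]
  set π1 : (Coprod F Z ⧸ N) →* F ⧸ R := QuotientGroup.lift N π hNker with hπ1
  have hker2 : (((QuotientGroup.mk' N).comp Coprod.inr).range) ≤ π1.ker := by
    rintro x ⟨z, rfl⟩
    simp [π1, π, MonoidHom.mem_ker]
  set π2 : ((Coprod F Z ⧸ N) ⧸ ((QuotientGroup.mk' N).comp Coprod.inr).range) →* F ⧸ R :=
    QuotientGroup.lift _ π1 hker2 with hπ2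
  set ι : F →* ((Coprod F Z ⧸ N) ⧸ ((QuotientGroup.mk' N).comp Coprod.inr).range) :=
    (QuotientGroup.mk' (((QuotientGroup.mk' N).comp Coprod.inr).range)).comp
      ((QuotientGroup.mk' N).comp Coprod.inl) with hι
  have hRker : R ≤ ι.ker := by
    intro r hr
    simp only [MonoidHom.mem_ker, hι, MonoidHom.comp_apply, QuotientGroup.mk'_apply]
    rw [show ((QuotientGroup.mk (Coprod.inl r) : Coprod F Z ⧸ N)) = _ from hrel ⟨r, hr⟩,
      QuotientGroup.eq_one_iff]
    exact ⟨_, rfl⟩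
  set ι2 : F ⧸ R →* ((Coprod F Z ⧸ N) ⧸ ((QuotientGroup.mk' N).comp Coprod.inr).range) :=
    QuotientGroup.lift R ι hRker with hι2
  have h2 : π2.comp ι2 = MonoidHom.id _ := by
    ext x
    simp [π2, ι2, ι, π1, π]
  have h1 : ι2.comp π2 = MonoidHom.id _ := by
    ext x
    · simp [π2, ι2, ι, π1, π]
    · have hr : (QuotientGroup.mk (QuotientGroup.mk (Coprod.inr x)) :
          (Coprod F Z ⧸ N) ⧸ ((QuotientGroup.mk' N).comp Coprod.inr).range) = 1 := by
        rw [QuotientGroup.eq_one_iff]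
        exact ⟨x, rfl⟩
      simp only [MonoidHom.comp_apply, MonoidHom.id_apply, QuotientGroup.mk'_apply, hπ2, hι2,
        QuotientGroup.lift_mk, QuotientGroup.lift_mk', hπ1, hπ, Coprod.lift_apply_inr,
        MonoidHom.one_apply, hr, map_one]
  refine ⟨MonoidHom.toMulEquiv π2 ι2 h1 h2, fun f => ?_⟩
  simp [MonoidHom.toMulEquiv, π2, π1, π]
end

section
/- If γ_α(−1) = −1, γ_α(1) = 1, and γ_α⁴ is the identity permutation of I, then α̂⁴ = ζ⁻² in H. -/
/-- The index set `I` of nonzero rational numbers. -/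
abbrev Qx : Type := {q : ℚ // q ≠ 0}

/-- `-1` as an element of `Qx`. -/
def qNegOne : Qx := ⟨-1, by norm_num⟩

/-- `1` as an element of `Qx`. -/
def qOne : Qx := ⟨1, one_ne_zero⟩

/-- `-1/2` as an element of `Qx`. -/
def qNegHalf : Qx := ⟨-1/2, by norm_num⟩

/-- if `γ_α` fixes `-1` and `1` and `γ_α⁴ = 1`, then `α̂⁴ = ζ⁻²`, where
`α̂ = A(-1)·T(-1,1)⁻¹·A(1)·P(γ_α)`. -/
theorem alphaHat_fourth_eq_zeta_negTwo
    {H : Type*} [Group H] (ζ : H) (hζ : ζ ∈ Subgroup.center H)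
    (A : Qx → H) (T : Qx → Qx → H) (P : Equiv.Perm Qx → H)
    (K1 : ∀ j, A j ^ 3 = 1)
    (K2 : ∀ j k ℓ, j ≠ k → j ≠ ℓ → k ≠ ℓ → T k ℓ * T j k = T j k * T j ℓ * T k ℓ)
    (K3 : ∀ j k, j ≠ k → A j * T j k * A k = A k * T k j * A j)
    (K4 : ∀ j k, j ≠ k → T j k * A j * T k j = ζ * A j * A k * P (Equiv.swap j k))
    (K5 : ∀ σ τ, P σ * P τ = P (σ * τ))
    (K6a : ∀ (σ : Equiv.Perm Qx) (j), P σ * A j = A (σ j) * P σ)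
    (K6b : ∀ (σ : Equiv.Perm Qx) (j k), j ≠ k → P σ * T j k = T (σ j) (σ k) * P σ)
    (K7a : ∀ j k l m, j ≠ k → j ≠ l → j ≠ m → k ≠ l → k ≠ m → l ≠ m →
      T j k * T l m = T l m * T j k)
    (K7b : ∀ j k l, j ≠ k → j ≠ l → k ≠ l → T j k * A l = A l * T j k)
    (K7c : ∀ j k, j ≠ k → A j * A k = A k * A j)
    (γα : Equiv.Perm Qx)
    (hα1 : γα qNegOne = qNegOne) (hα2 : γα qOne = qOne) (hα4 : γα ^ 4 = 1) :
    (A qNegOne * (T qNegOne qOne)⁻¹ * A qOne * P γα) ^ 4 = ζ ^ (-2 : ℤ) := by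
  have hjk : qNegOne ≠ qOne := by
    intro h
    have := congrArg Subtype.val h
    norm_num [qNegOne, qOne] at this
  set j := qNegOne
  set k := qOne
  set a := A j with ha_def
  set b := A k with hb_def
  set t := T j k with ht_def
  set u := T k j with hu_def
  set s := P (Equiv.swap j k) with hs_def
  set p := P γα with hp_def
  -- centrality
  have hzc : ∀ g : H, g * ζ = ζ * g := fun g => Subgroup.mem_center_iff.mp hζ g
  have hzi : ∀ g : H, g * ζ⁻¹ = ζ⁻¹ * g := by
    intro g
    calc g * ζ⁻¹ = ζ⁻¹ * (ζ * g) * ζ⁻¹ := by group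
      _ = ζ⁻¹ * (g * ζ) * ζ⁻¹ := by rw [← hzc]
      _ = ζ⁻¹ * g := by group
  -- P 1 = 1
  have hP1 : P 1 = 1 := by
    have h := K5 1 1
    rw [one_mul] at h
    have := mul_left_cancel (a := P 1) (b := P 1) (c := 1) (by rw [mul_one, h])
    exact this
  -- s relations
  have hs2 : s * s = 1 := by
    rw [hs_def, K5, Equiv.swap_mul_self, hP1]
  have hsinv : s⁻¹ = s := by
    exact inv_eq_of_mul_eq_one_right hs2
  have hsa : s * a = b * s := by
    rw [hs_def, ha_def, K6a, Equiv.swap_apply_left]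
  have hsb : s * b = a * s := by
    rw [hs_def, hb_def, K6a, Equiv.swap_apply_right]
  have hst : s * t = u * s := by
    rw [hs_def, ht_def, K6b _ _ _ hjk, Equiv.swap_apply_left, Equiv.swap_apply_right]
  have hsu : s * u = t * s := by
    rw [hs_def, hu_def, K6b _ _ _ hjk.symm, Equiv.swap_apply_left, Equiv.swap_apply_right]
  have hsa' : s * a⁻¹ = b⁻¹ * s := by
    calc s * a⁻¹ = b⁻¹ * (b * s) * a⁻¹ := by group
      _ = b⁻¹ * (s * a) * a⁻¹ := by rw [hsa]
      _ = b⁻¹ * s := by group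
  have hsb' : s * b⁻¹ = a⁻¹ * s := by
    calc s * b⁻¹ = a⁻¹ * (a * s) * b⁻¹ := by group
      _ = a⁻¹ * (s * b) * b⁻¹ := by rw [hsb]
      _ = a⁻¹ * s := by group
  -- commutation of a and b
  have hab : a * b = b * a := K7c j k hjk
  have hab' : b⁻¹ * a = a * b⁻¹ := by
    calc b⁻¹ * a = b⁻¹ * (a * b) * b⁻¹ := by group
      _ = b⁻¹ * (b * a) * b⁻¹ := by rw [hab]
      _ = a * b⁻¹ := by group
  -- K4 instances
  have h4 : t * a * u = ζ * a * b * s := K4 j k hjk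
  have h4' : u * b * t = ζ * b * a * s := by
    have h := K4 k j hjk.symm
    rwa [Equiv.swap_comm, ← hs_def, ← ha_def, ← hb_def, ← ht_def, ← hu_def] at h
  have ha3 : a * a * a = 1 := by
    have := K1 j
    rw [← ha_def] at this
    rw [pow_succ, pow_succ, pow_one] at this
    exact this
  -- p commutes with a, b, t
  have hpa : p * a = a * p := by rw [hp_def, ha_def, K6a, hα1]
  have hpb : p * b = b * p := by rw [hp_def, hb_def, K6a, hα2]
  have hpt : p * t = t * p := by rw [hp_def, ht_def, K6b _ _ _ hjk, hα1, hα2]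
  have hcomm : Commute (a * t⁻¹ * b) p := by
    have c1 : Commute p a := hpa
    have c2 : Commute p b := hpb
    have c3 : Commute p t := hpt
    exact ((c1.mul_right c3.inv_right).mul_right c2).symm
  have hp4 : p ^ 4 = 1 := by
    have h1 : p ^ 4 = p * p * p * p := by
      rw [pow_succ, pow_succ, pow_succ, pow_one]
    rw [h1, hp_def, K5, K5, K5]
    have h2 : γα * γα * γα * γα = γα ^ 4 := by
      rw [pow_succ, pow_succ, pow_succ, pow_one]
    rw [h2, hα4, hP1]
  -- invert K4 to express t⁻¹
  have et : t⁻¹ = ζ⁻¹ * (a * u * s * b⁻¹ * a⁻¹) := by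
    calc t⁻¹ = a * u * (t * a * u)⁻¹ := by group
      _ = a * u * (ζ * a * b * s)⁻¹ := by rw [h4]
      _ = a * u * (s⁻¹ * b⁻¹ * a⁻¹ * ζ⁻¹) := by group
      _ = a * u * (s * b⁻¹ * a⁻¹ * ζ⁻¹) := by rw [hsinv]
      _ = (a * u * s * b⁻¹ * a⁻¹) * ζ⁻¹ := by group
      _ = ζ⁻¹ * (a * u * s * b⁻¹ * a⁻¹) := hzi _
  -- the core element
  have ex : a * t⁻¹ * b = ζ⁻¹ * (a * a * u * b⁻¹ * s) := by
    calc a * t⁻¹ * b = a * (ζ⁻¹ * (a * u * s * b⁻¹ * a⁻¹)) * b := by rw [et]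
      _ = (a * ζ⁻¹) * (a * u * s * b⁻¹ * a⁻¹ * b) := by group
      _ = (ζ⁻¹ * a) * (a * u * s * b⁻¹ * a⁻¹ * b) := by rw [hzi]
      _ = ζ⁻¹ * (a * a * u * (s * b⁻¹) * a⁻¹ * b) := by group
      _ = ζ⁻¹ * (a * a * u * (a⁻¹ * s) * a⁻¹ * b) := by rw [hsb']
      _ = ζ⁻¹ * (a * a * u * a⁻¹ * (s * a⁻¹) * b) := by group
      _ = ζ⁻¹ * (a * a * u * a⁻¹ * (b⁻¹ * s) * b) := by rw [hsa']
      _ = ζ⁻¹ * (a * a * u * a⁻¹ * b⁻¹ * (s * b)) := by group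
      _ = ζ⁻¹ * (a * a * u * a⁻¹ * b⁻¹ * (a * s)) := by rw [hsb]
      _ = ζ⁻¹ * (a * a * u * a⁻¹ * (b⁻¹ * a) * s) := by group
      _ = ζ⁻¹ * (a * a * u * a⁻¹ * (a * b⁻¹) * s) := by rw [hab']
      _ = ζ⁻¹ * (a * a * u * b⁻¹ * s) := by group
  -- square of the core element
  have exx : (a * t⁻¹ * b) * (a * t⁻¹ * b) = ζ⁻¹ * s := by
    rw [ex]
    calc (ζ⁻¹ * (a * a * u * b⁻¹ * s)) * (ζ⁻¹ * (a * a * u * b⁻¹ * s))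
        = ζ⁻¹ * ((a * a * u * b⁻¹ * s) * ζ⁻¹) * (a * a * u * b⁻¹ * s) := by group
      _ = ζ⁻¹ * (ζ⁻¹ * (a * a * u * b⁻¹ * s)) * (a * a * u * b⁻¹ * s) := by rw [hzi]
      _ = ζ⁻¹ * ζ⁻¹ * (a * a * u * b⁻¹ * (s * a) * a * u * b⁻¹ * s) := by group
      _ = ζ⁻¹ * ζ⁻¹ * (a * a * u * b⁻¹ * (b * s) * a * u * b⁻¹ * s) := by rw [hsa]
      _ = ζ⁻¹ * ζ⁻¹ * (a * a * u * (s * a) * u * b⁻¹ * s) := by group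
      _ = ζ⁻¹ * ζ⁻¹ * (a * a * u * (b * s) * u * b⁻¹ * s) := by rw [hsa]
      _ = ζ⁻¹ * ζ⁻¹ * (a * a * u * b * (s * u) * b⁻¹ * s) := by group
      _ = ζ⁻¹ * ζ⁻¹ * (a * a * u * b * (t * s) * b⁻¹ * s) := by rw [hsu]
      _ = ζ⁻¹ * ζ⁻¹ * (a * a * u * b * t * (s * b⁻¹) * s) := by group
      _ = ζ⁻¹ * ζ⁻¹ * (a * a * u * b * t * (a⁻¹ * s) * s) := by rw [hsb']
      _ = ζ⁻¹ * ζ⁻¹ * (a * a * u * b * t * a⁻¹ * (s * s)) := by group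
      _ = ζ⁻¹ * ζ⁻¹ * (a * a * u * b * t * a⁻¹ * 1) := by rw [hs2]
      _ = ζ⁻¹ * ζ⁻¹ * (a * a * (u * b * t) * a⁻¹) := by group
      _ = ζ⁻¹ * ζ⁻¹ * (a * a * (ζ * b * a * s) * a⁻¹) := by rw [h4']
      _ = ζ⁻¹ * ζ⁻¹ * ((a * a) * ζ * (b * a * s * a⁻¹)) := by group
      _ = ζ⁻¹ * ζ⁻¹ * ((a * a * ζ) * (b * a * s * a⁻¹)) := by group
      _ = ζ⁻¹ * ζ⁻¹ * ((ζ * (a * a)) * (b * a * s * a⁻¹)) := by rw [hzc]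
      _ = ζ⁻¹ * ζ⁻¹ * ζ * (a * a * b * a * (s * a⁻¹)) := by group
      _ = ζ⁻¹ * ζ⁻¹ * ζ * (a * a * b * a * (b⁻¹ * s)) := by rw [hsa']
      _ = ζ⁻¹ * ζ⁻¹ * ζ * (a * a * (b * a * b⁻¹) * s) := by group
      _ = ζ⁻¹ * ζ⁻¹ * ζ * (a * a * (b * (a * b⁻¹)) * s) := by group
      _ = ζ⁻¹ * ζ⁻¹ * ζ * (a * a * (b * (b⁻¹ * a)) * s) := by rw [hab']
      _ = ζ⁻¹ * ((a * a * a) * s) := by group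
      _ = ζ⁻¹ * (1 * s) := by rw [ha3]
      _ = ζ⁻¹ * s := by group
  -- assemble
  have key : (a * t⁻¹ * b) ^ 4 = ζ ^ (-2 : ℤ) := by
    calc (a * t⁻¹ * b) ^ 4
        = ((a * t⁻¹ * b) * (a * t⁻¹ * b)) * ((a * t⁻¹ * b) * (a * t⁻¹ * b)) := by
          rw [show (4:ℕ) = 2*2 from rfl, pow_mul, pow_two, pow_two]
      _ = (ζ⁻¹ * s) * (ζ⁻¹ * s) := by rw [exx]
      _ = ζ⁻¹ * (s * ζ⁻¹) * s := by group
      _ = ζ⁻¹ * (ζ⁻¹ * s) * s := by rw [hzi]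
      _ = ζ⁻¹ * ζ⁻¹ * (s * s) := by group
      _ = ζ⁻¹ * ζ⁻¹ * 1 := by rw [hs2]
      _ = ζ ^ (-2 : ℤ) := by group
  calc (a * t⁻¹ * b * p) ^ 4 = (a * t⁻¹ * b) ^ 4 * p ^ 4 := hcomm.mul_pow 4
    _ = (a * t⁻¹ * b) ^ 4 * 1 := by rw [hp4]
    _ = ζ ^ (-2 : ℤ) := by rw [mul_one, key]
end

section
/- If γ_α(−1) = −1 and γ_α(1) = 1, then α̂² = ζ⁻¹ · P(swap(−1,1)) · P(γ_α)² in H. -/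
/-- Abstract core computation: in any group, given the instantiated Kashaev-type
relations among `a, b, t, s, w, p` and a central-ish `ζ`, we get
`(a t⁻¹ b p)² = ζ⁻¹ w p²`. -/
lemma alphaHat_core {H : Type*} [Group H] (ζ a b t s w p : H)
    (hζinv : ∀ x : H, x * ζ⁻¹ = ζ⁻¹ * x)
    (hab : a * b = b * a)
    (ha3 : a * a * a = 1)
    (hK3 : a * t * b = b * s * a)
    (hK4 : t * a * s = ζ * a * b * w)
    (hw_inv : w⁻¹ = w)
    (hwa : w * a = b * w)
    (hwb : w * b = a * w)
    (hws : w * s = t * w)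
    (hpa : p * a = a * p)
    (hpb : p * b = b * p)
    (hpt : p * t = t * p) :
    (a * t⁻¹ * b * p) ^ 2 = ζ⁻¹ * w * p ^ 2 := by
  have hconj : ∀ x u v : H, x * u = v * x → x * u⁻¹ = v⁻¹ * x := by
    intro x u v h
    calc x * u⁻¹ = v⁻¹ * ((v * x) * u⁻¹) := by group
      _ = v⁻¹ * ((x * u) * u⁻¹) := by rw [← h]
      _ = v⁻¹ * x := by group
  have hwainv := hconj w a b hwa
  have hwsinv := hconj w s t hws
  have hz : ∀ x y : H, x * (ζ⁻¹ * y) = ζ⁻¹ * (x * y) := fun x y => by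
    rw [← mul_assoc, hζinv, mul_assoc]
  have cab : Commute a b := hab
  have hba' : ∀ x : H, b⁻¹ * (a⁻¹ * (b * x)) = a⁻¹ * x := fun x => by
    rw [show b⁻¹ * (a⁻¹ * (b * x)) = b⁻¹ * ((a⁻¹ * b) * x) from by group,
        cab.inv_left.eq]
    group
  have hwainv' : ∀ x : H, w * (a⁻¹ * x) = b⁻¹ * (w * x) := fun x => by
    rw [← mul_assoc, hwainv, mul_assoc]
  have hwb' : ∀ x : H, w * (b * x) = a * (w * x) := fun x => by
    rw [← mul_assoc, hwb, mul_assoc]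
  have hwsinv' : ∀ x : H, w * (s⁻¹ * x) = t⁻¹ * (w * x) := fun x => by
    rw [← mul_assoc, hwsinv, mul_assoc]
  have ht : t = a⁻¹ * (b * s * a) * b⁻¹ := by rw [← hK3]; group
  have E1 : a * (t⁻¹ * b) = b * (s⁻¹ * a) := by
    rw [ht]
    calc a * ((a⁻¹ * (b * s * a) * b⁻¹)⁻¹ * b)
        = (a * b) * (a⁻¹ * (s⁻¹ * (b⁻¹ * (a * b)))) := by group
      _ = (b * a) * (a⁻¹ * (s⁻¹ * (b⁻¹ * (b * a)))) := by rw [hab]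
      _ = b * (s⁻¹ * a) := by group
  have E1' : ∀ x : H, a * (t⁻¹ * (b * x)) = b * (s⁻¹ * (a * x)) := fun x => by
    rw [show a * (t⁻¹ * (b * x)) = (a * (t⁻¹ * b)) * x from by group, E1]
    group
  have ht2 : t = ζ * a * b * w * s⁻¹ * a⁻¹ := by rw [← hK4]; group
  have E2 : t⁻¹ = ζ⁻¹ * (a * (s * (w * (b⁻¹ * a⁻¹)))) := by
    rw [ht2]
    calc (ζ * a * b * w * s⁻¹ * a⁻¹)⁻¹
        = (a * (s * (w⁻¹ * (b⁻¹ * a⁻¹)))) * ζ⁻¹ := by group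
      _ = (a * (s * (w * (b⁻¹ * a⁻¹)))) * ζ⁻¹ := by rw [hw_inv]
      _ = ζ⁻¹ * (a * (s * (w * (b⁻¹ * a⁻¹)))) := hζinv _
  have core : (a * t⁻¹ * b) * (a * t⁻¹ * b) = ζ⁻¹ * w := by
    calc (a * t⁻¹ * b) * (a * t⁻¹ * b)
        = a * (t⁻¹ * (b * (a * (t⁻¹ * b)))) := by group
      _ = a * (t⁻¹ * (b * (b * (s⁻¹ * a)))) := by rw [E1]
      _ = ζ⁻¹ * (a * (a * (s * (w * (b⁻¹ * (a⁻¹ * (b * (b * (s⁻¹ * a))))))))) := by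
          rw [E2]; simp only [mul_assoc]; rw [hz]
      _ = ζ⁻¹ * (a * (a * (s * (w * (a⁻¹ * (b * (s⁻¹ * a))))))) := by rw [hba']
      _ = ζ⁻¹ * (a * (a * (s * (b⁻¹ * (w * (b * (s⁻¹ * a))))))) := by rw [hwainv']
      _ = ζ⁻¹ * (a * (a * (s * (b⁻¹ * (a * (w * (s⁻¹ * a))))))) := by rw [hwb']
      _ = ζ⁻¹ * (a * (a * (s * (b⁻¹ * (a * (t⁻¹ * (w * a))))))) := by rw [hwsinv']
      _ = ζ⁻¹ * (a * (a * (s * (b⁻¹ * (a * (t⁻¹ * (b * w))))))) := by rw [hwa]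
      _ = ζ⁻¹ * (a * (a * (s * (b⁻¹ * (b * (s⁻¹ * (a * w))))))) := by rw [E1']
      _ = ζ⁻¹ * (a * (a * (a * w))) := by rw [inv_mul_cancel_left, mul_inv_cancel_left]
      _ = ζ⁻¹ * ((a * a * a) * w) := by group
      _ = ζ⁻¹ * w := by rw [ha3, one_mul]
  have cpa : Commute p a := hpa
  have cpb : Commute p b := hpb
  have cpt : Commute p t := hpt
  have cpu : Commute p (a * t⁻¹ * b) := (cpa.mul_right cpt.inv_right).mul_right cpb
  calc (a * t⁻¹ * b * p) ^ 2
      = (a * t⁻¹ * b) * (p * (a * t⁻¹ * b)) * p := by rw [sq]; group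
    _ = (a * t⁻¹ * b) * ((a * t⁻¹ * b) * p) * p := by rw [cpu.eq]
    _ = ((a * t⁻¹ * b) * (a * t⁻¹ * b)) * (p * p) := by group
    _ = (ζ⁻¹ * w) * (p * p) := by rw [core]
    _ = ζ⁻¹ * w * p ^ 2 := by rw [sq]

/-- if `γ_α` fixes `-1` and `1`, then
`α̂² = ζ⁻¹ · P(swap(-1,1)) · P(γ_α)²`, where `α̂ = A(-1)·T(-1,1)⁻¹·A(1)·P(γ_α)`. -/
theorem alphaHat_squared
    {H : Type*} [Group H] (ζ : H) (hζ : ζ ∈ Subgroup.center H)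
    (A : Qx → H) (T : Qx → Qx → H) (P : Equiv.Perm Qx → H)
    (K1 : ∀ j, A j ^ 3 = 1)
    (K2 : ∀ j k ℓ, j ≠ k → j ≠ ℓ → k ≠ ℓ → T k ℓ * T j k = T j k * T j ℓ * T k ℓ)
    (K3 : ∀ j k, j ≠ k → A j * T j k * A k = A k * T k j * A j)
    (K4 : ∀ j k, j ≠ k → T j k * A j * T k j = ζ * A j * A k * P (Equiv.swap j k))
    (K5 : ∀ σ τ, P σ * P τ = P (σ * τ))
    (K6a : ∀ (σ : Equiv.Perm Qx) (j), P σ * A j = A (σ j) * P σ)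
    (K6b : ∀ (σ : Equiv.Perm Qx) (j k), j ≠ k → P σ * T j k = T (σ j) (σ k) * P σ)
    (K7a : ∀ j k l m, j ≠ k → j ≠ l → j ≠ m → k ≠ l → k ≠ m → l ≠ m →
      T j k * T l m = T l m * T j k)
    (K7b : ∀ j k l, j ≠ k → j ≠ l → k ≠ l → T j k * A l = A l * T j k)
    (K7c : ∀ j k, j ≠ k → A j * A k = A k * A j)
    (γα : Equiv.Perm Qx)
    (hα1 : γα qNegOne = qNegOne) (hα2 : γα qOne = qOne) :
    (A qNegOne * (T qNegOne qOne)⁻¹ * A qOne * P γα) ^ 2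
      = ζ⁻¹ * P (Equiv.swap qNegOne qOne) * (P γα) ^ 2 := by
  have hne : qNegOne ≠ qOne := by
    intro h
    have h' := congrArg Subtype.val h
    norm_num [qNegOne, qOne] at h'
  have hne' : qOne ≠ qNegOne := hne.symm
  have hs1 : Equiv.swap qNegOne qOne qNegOne = qOne := Equiv.swap_apply_left _ _
  have hs2 : Equiv.swap qNegOne qOne qOne = qNegOne := Equiv.swap_apply_right _ _
  have hζinv : ∀ x : H, x * ζ⁻¹ = ζ⁻¹ * x := fun x =>
    Subgroup.mem_center_iff.mp (Subgroup.inv_mem _ hζ) x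
  have hP1 : P 1 = 1 := by
    have h := K5 1 1
    rw [one_mul] at h
    exact mul_eq_left.mp h
  have hww : P (Equiv.swap qNegOne qOne) * P (Equiv.swap qNegOne qOne) = 1 := by
    rw [K5, Equiv.swap_mul_self, hP1]
  have hw_inv : (P (Equiv.swap qNegOne qOne))⁻¹ = P (Equiv.swap qNegOne qOne) :=
    inv_eq_of_mul_eq_one_right hww
  have hwa : P (Equiv.swap qNegOne qOne) * A qNegOne
      = A qOne * P (Equiv.swap qNegOne qOne) := by
    have h := K6a (Equiv.swap qNegOne qOne) qNegOne
    rwa [hs1] at h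
  have hwb : P (Equiv.swap qNegOne qOne) * A qOne
      = A qNegOne * P (Equiv.swap qNegOne qOne) := by
    have h := K6a (Equiv.swap qNegOne qOne) qOne
    rwa [hs2] at h
  have hws : P (Equiv.swap qNegOne qOne) * T qOne qNegOne
      = T qNegOne qOne * P (Equiv.swap qNegOne qOne) := by
    have h := K6b (Equiv.swap qNegOne qOne) qOne qNegOne hne'
    rwa [hs2, hs1] at h
  have hpa : P γα * A qNegOne = A qNegOne * P γα := by
    have h := K6a γα qNegOne
    rwa [hα1] at h
  have hpb : P γα * A qOne = A qOne * P γα := by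
    have h := K6a γα qOne
    rwa [hα2] at h
  have hpt : P γα * T qNegOne qOne = T qNegOne qOne * P γα := by
    have h := K6b γα qNegOne qOne hne
    rwa [hα1, hα2] at h
  have ha3 : A qNegOne * A qNegOne * A qNegOne = 1 := by
    have h := K1 qNegOne
    rw [show (3 : ℕ) = 2 + 1 from rfl, pow_succ, sq] at h
    exact h
  exact alphaHat_core ζ (A qNegOne) (A qOne) (T qNegOne qOne) (T qOne qNegOne)
    (P (Equiv.swap qNegOne qOne)) (P γα) hζinv (K7c _ _ hne) ha3
    (K3 _ _ hne) (K4 _ _ hne) hw_inv hwa hwb hws hpa hpb hpt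
end

section
/- If γ_β(−1) = −1 and γ_β(1) = −1/2, then β̂ · α̂ = A(−1)² · T(−1, −1/2)⁻¹ · A(−1/2) · P(γ_β · γ_α) in H, where γ_β · γ_α is the composite permutation x ↦ γ_β(γ_α(x)). -/
/-- if `γ_β(-1) = -1` and `γ_β(1) = -1/2`, then
`β̂·α̂ = A(-1)²·T(-1,-1/2)⁻¹·A(-1/2)·P(γ_β·γ_α)`. -/
theorem betaHat_mul_alphaHat
    {H : Type*} [Group H] (ζ : H) (hζ : ζ ∈ Subgroup.center H)
    (A : Qx → H) (T : Qx → Qx → H) (P : Equiv.Perm Qx → H)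
    (K1 : ∀ j, A j ^ 3 = 1)
    (K2 : ∀ j k ℓ, j ≠ k → j ≠ ℓ → k ≠ ℓ → T k ℓ * T j k = T j k * T j ℓ * T k ℓ)
    (K3 : ∀ j k, j ≠ k → A j * T j k * A k = A k * T k j * A j)
    (K4 : ∀ j k, j ≠ k → T j k * A j * T k j = ζ * A j * A k * P (Equiv.swap j k))
    (K5 : ∀ σ τ, P σ * P τ = P (σ * τ))
    (K6a : ∀ (σ : Equiv.Perm Qx) (j), P σ * A j = A (σ j) * P σ)
    (K6b : ∀ (σ : Equiv.Perm Qx) (j k), j ≠ k → P σ * T j k = T (σ j) (σ k) * P σ)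
    (K7a : ∀ j k l m, j ≠ k → j ≠ l → j ≠ m → k ≠ l → k ≠ m → l ≠ m →
      T j k * T l m = T l m * T j k)
    (K7b : ∀ j k l, j ≠ k → j ≠ l → k ≠ l → T j k * A l = A l * T j k)
    (K7c : ∀ j k, j ≠ k → A j * A k = A k * A j)
    (γα γβ : Equiv.Perm Qx)
    (hβ1 : γβ qNegOne = qNegOne) (hβ2 : γβ qOne = qNegHalf) :
    (A qNegOne * P γβ) * (A qNegOne * (T qNegOne qOne)⁻¹ * A qOne * P γα)
      = (A qNegOne) ^ 2 * (T qNegOne qNegHalf)⁻¹ * A qNegHalf * P (γβ * γα) := by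
  have hne : qNegOne ≠ qOne := by
    intro h; exact absurd (congrArg Subtype.val h) (by norm_num [qNegOne, qOne])
  have hinv : P γβ * (T qNegOne qOne)⁻¹
      = (T (γβ qNegOne) (γβ qOne))⁻¹ * P γβ := by
    have := K6b γβ qNegOne qOne hne
    calc P γβ * (T qNegOne qOne)⁻¹
        = (T (γβ qNegOne) (γβ qOne))⁻¹ * (P γβ * T qNegOne qOne)
            * (T qNegOne qOne)⁻¹ := by rw [this]; group
      _ = (T (γβ qNegOne) (γβ qOne))⁻¹ * P γβ := by group
  calc (A qNegOne * P γβ) * (A qNegOne * (T qNegOne qOne)⁻¹ * A qOne * P γα)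
      = A qNegOne * (P γβ * A qNegOne) * (T qNegOne qOne)⁻¹ * A qOne * P γα := by
        group
    _ = A qNegOne * (A (γβ qNegOne) * P γβ) * (T qNegOne qOne)⁻¹ * A qOne * P γα := by
        rw [K6a]
    _ = A qNegOne * A qNegOne * (P γβ * (T qNegOne qOne)⁻¹) * A qOne * P γα := by
        rw [hβ1]; group
    _ = A qNegOne * A qNegOne * (T qNegOne qNegHalf)⁻¹ * (P γβ * A qOne) * P γα := by
        rw [hinv, hβ1, hβ2]; group
    _ = A qNegOne * A qNegOne * (T qNegOne qNegHalf)⁻¹ * A qNegHalf * (P γβ * P γα) := by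
        rw [K6a, hβ2]; group
    _ = (A qNegOne) ^ 2 * (T qNegOne qNegHalf)⁻¹ * A qNegHalf * P (γβ * γα) := by
        rw [K5, sq]
end

section
/- For any mutually distinct a, b, c ∈ I, one has (A(a)² · T(a,b)⁻¹ · A(b) · P(swap(b,c)))⁵ = ζ⁻³ in H. -/
/-- for any mutually distinct `a, b, c ∈ I`,
`(A(a)²·T(a,b)⁻¹·A(b)·P(swap(b,c)))⁵ = ζ⁻³`. -/
theorem betaHat_alphaHat_star_fifth
    {H : Type*} [Group H] (ζ : H) (hζ : ζ ∈ Subgroup.center H)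
    (A : Qx → H) (T : Qx → Qx → H) (P : Equiv.Perm Qx → H)
    (K1 : ∀ j, A j ^ 3 = 1)
    (K2 : ∀ j k ℓ, j ≠ k → j ≠ ℓ → k ≠ ℓ → T k ℓ * T j k = T j k * T j ℓ * T k ℓ)
    (K3 : ∀ j k, j ≠ k → A j * T j k * A k = A k * T k j * A j)
    (K4 : ∀ j k, j ≠ k → T j k * A j * T k j = ζ * A j * A k * P (Equiv.swap j k))
    (K5 : ∀ σ τ, P σ * P τ = P (σ * τ))
    (K6a : ∀ (σ : Equiv.Perm Qx) (j), P σ * A j = A (σ j) * P σ)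
    (K6b : ∀ (σ : Equiv.Perm Qx) (j k), j ≠ k → P σ * T j k = T (σ j) (σ k) * P σ)
    (K7a : ∀ j k l m, j ≠ k → j ≠ l → j ≠ m → k ≠ l → k ≠ m → l ≠ m →
      T j k * T l m = T l m * T j k)
    (K7b : ∀ j k l, j ≠ k → j ≠ l → k ≠ l → T j k * A l = A l * T j k)
    (K7c : ∀ j k, j ≠ k → A j * A k = A k * A j)
    (a b c : Qx) (hab : a ≠ b) (hac : a ≠ c) (hbc : b ≠ c) :
    (A a ^ 2 * (T a b)⁻¹ * A b * P (Equiv.swap b c)) ^ 5 = ζ ^ (-3 : ℤ) := by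
  have hba := hab.symm
  have hca := hac.symm
  have hcb := hbc.symm
  have hζc : ∀ g : H, g * ζ = ζ * g := Subgroup.mem_center_iff.mp hζ
  have hζic : ∀ g : H, g * ζ⁻¹ = ζ⁻¹ * g :=
    Subgroup.mem_center_iff.mp ((Subgroup.center H).inv_mem hζ)
  -- cubes
  have cube : ∀ j, A j * A j * A j = 1 := fun j => by
    have h := K1 j; rwa [pow_succ, pow_succ, pow_one] at h
  have hc : ∀ j, ∀ x : H, A j * (A j * (A j * x)) = x := fun j x => by
    rw [← mul_assoc, ← mul_assoc, cube j, one_mul]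
  have hAinv : ∀ j, (A j)⁻¹ = A j * A j := fun j =>
    inv_eq_of_mul_eq_one_right (by rw [← mul_assoc, cube j])
  -- sorting lemmas for A's
  have hba' : ∀ x : H, A b * (A a * x) = A a * (A b * x) := fun x => by
    rw [← mul_assoc, ← K7c a b hab, mul_assoc]
  have hca' : ∀ x : H, A c * (A a * x) = A a * (A c * x) := fun x => by
    rw [← mul_assoc, ← K7c a c hac, mul_assoc]
  have hcb' : ∀ x : H, A c * (A b * x) = A b * (A c * x) := fun x => by
    rw [← mul_assoc, ← K7c b c hbc, mul_assoc]
  -- central movers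
  have hzg' : ∀ g x : H, g * (ζ * x) = ζ * (g * x) := fun g x => by
    rw [← mul_assoc, hζc g, mul_assoc]
  have hzig' : ∀ g x : H, g * (ζ⁻¹ * x) = ζ⁻¹ * (g * x) := fun g x => by
    rw [← mul_assoc, hζic g, mul_assoc]
  -- P of identity
  have hP1 : P 1 = 1 := by
    have h := K5 1 1
    rw [mul_one] at h
    exact mul_left_cancel (h.trans (mul_one (P 1)).symm)
  -- the 3-cycle s
  set s : Equiv.Perm Qx := Equiv.swap a b * Equiv.swap b c with hs
  have sa : s a = b := by
    rw [hs, Equiv.Perm.mul_apply, Equiv.swap_apply_of_ne_of_ne hab hac,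
      Equiv.swap_apply_left]
  have sb : s b = c := by
    rw [hs, Equiv.Perm.mul_apply, Equiv.swap_apply_left,
      Equiv.swap_apply_of_ne_of_ne hca hcb]
  have sc : s c = a := by
    rw [hs, Equiv.Perm.mul_apply, Equiv.swap_apply_right, Equiv.swap_apply_right]
  have sfix : ∀ x, x ≠ a → x ≠ b → x ≠ c → s x = x := fun x h1 h2 h3 => by
    rw [hs, Equiv.Perm.mul_apply, Equiv.swap_apply_of_ne_of_ne h2 h3,
      Equiv.swap_apply_of_ne_of_ne h1 h2]
  have s2a : (s * s) a = c := by rw [Equiv.Perm.mul_apply, sa, sb]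
  have s2b : (s * s) b = a := by rw [Equiv.Perm.mul_apply, sb, sc]
  have s2c : (s * s) c = b := by rw [Equiv.Perm.mul_apply, sc, sa]
  have hs3 : s * s * s = 1 := by
    ext x
    rw [Equiv.Perm.mul_apply, Equiv.Perm.mul_apply, Equiv.Perm.one_apply]
    by_cases h1 : x = a
    · rw [h1, sa, sb, sc]
    by_cases h2 : x = b
    · rw [h2, sb, sc, sa]
    by_cases h3 : x = c
    · rw [h3, sc, sa, sb]
    rw [sfix x h1 h2 h3, sfix x h1 h2 h3, sfix x h1 h2 h3]
  have hsw : Equiv.swap b c * (s * s) = Equiv.swap a b := by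
    ext x
    rw [Equiv.Perm.mul_apply]
    by_cases h1 : x = a
    · rw [h1, s2a, Equiv.swap_apply_right, Equiv.swap_apply_left]
    by_cases h2 : x = b
    · rw [h2, s2b, Equiv.swap_apply_of_ne_of_ne hab hac, Equiv.swap_apply_right]
    by_cases h3 : x = c
    · rw [h3, s2c, Equiv.swap_apply_left, Equiv.swap_apply_of_ne_of_ne hca hcb]
    rw [Equiv.Perm.mul_apply, sfix x h1 h2 h3, sfix x h1 h2 h3,
      Equiv.swap_apply_of_ne_of_ne h2 h3, Equiv.swap_apply_of_ne_of_ne h1 h2]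
  -- P-conjugation (chained forms)
  have hPabAa' : ∀ x : H, P (Equiv.swap a b) * (A a * x) = A b * (P (Equiv.swap a b) * x) :=
    fun x => by rw [← mul_assoc, K6a (Equiv.swap a b) a, Equiv.swap_apply_left, mul_assoc]
  have hPabAb' : ∀ x : H, P (Equiv.swap a b) * (A b * x) = A a * (P (Equiv.swap a b) * x) :=
    fun x => by rw [← mul_assoc, K6a (Equiv.swap a b) b, Equiv.swap_apply_right, mul_assoc]
  have hPabAc' : ∀ x : H, P (Equiv.swap a b) * (A c * x) = A c * (P (Equiv.swap a b) * x) :=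
    fun x => by
      rw [← mul_assoc, K6a (Equiv.swap a b) c, Equiv.swap_apply_of_ne_of_ne hca hcb, mul_assoc]
  have hPbcAa' : ∀ x : H, P (Equiv.swap b c) * (A a * x) = A a * (P (Equiv.swap b c) * x) :=
    fun x => by
      rw [← mul_assoc, K6a (Equiv.swap b c) a, Equiv.swap_apply_of_ne_of_ne hab hac, mul_assoc]
  have hPbcAc' : ∀ x : H, P (Equiv.swap b c) * (A c * x) = A b * (P (Equiv.swap b c) * x) :=
    fun x => by rw [← mul_assoc, K6a (Equiv.swap b c) c, Equiv.swap_apply_right, mul_assoc]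
  have hPbcTac' : ∀ x : H,
      P (Equiv.swap b c) * (T a c * x) = T a b * (P (Equiv.swap b c) * x) := fun x => by
    rw [← mul_assoc, K6b (Equiv.swap b c) a c hac,
      Equiv.swap_apply_of_ne_of_ne hab hac, Equiv.swap_apply_right, mul_assoc]
  have hPsTba' : ∀ x : H, P s * (T b a * x) = T c b * (P s * x) := fun x => by
    rw [← mul_assoc, K6b s b a hba, sb, sa, mul_assoc]
  have hPsAb' : ∀ x : H, P s * (A b * x) = A c * (P s * x) := fun x => by
    rw [← mul_assoc, K6a s b, sb, mul_assoc]
  have hPs2Aa' : ∀ x : H, P (s * s) * (A a * x) = A c * (P (s * s) * x) := fun x => by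
    rw [← mul_assoc, K6a (s * s) a, s2a, mul_assoc]
  have hPs2Ab' : ∀ x : H, P (s * s) * (A b * x) = A a * (P (s * s) * x) := fun x => by
    rw [← mul_assoc, K6a (s * s) b, s2b, mul_assoc]
  have hPs2Ac' : ∀ x : H, P (s * s) * (A c * x) = A b * (P (s * s) * x) := fun x => by
    rw [← mul_assoc, K6a (s * s) c, s2c, mul_assoc]
  have hPs2Tba' : ∀ x : H, P (s * s) * (T b a * x) = T a c * (P (s * s) * x) := fun x => by
    rw [← mul_assoc, K6b (s * s) b a hba, s2b, s2a, mul_assoc]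
  have hPs2Tac' : ∀ x : H, P (s * s) * (T a c * x) = T c b * (P (s * s) * x) := fun x => by
    rw [← mul_assoc, K6b (s * s) a c hac, s2a, s2c, mul_assoc]
  -- P-product lemmas
  have hPsPs' : ∀ x : H, P s * (P s * x) = P (s * s) * x := fun x => by
    rw [← mul_assoc, K5]
  have hPs2Ps' : ∀ x : H, P (s * s) * (P s * x) = x := fun x => by
    rw [← mul_assoc, K5, hs3, hP1, one_mul]
  have hPbcPs2' : ∀ x : H,
      P (Equiv.swap b c) * (P (s * s) * x) = P (Equiv.swap a b) * x := fun x => by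
    rw [← mul_assoc, K5, hsw]
  have hPabPab' : ∀ x : H,
      P (Equiv.swap a b) * (P (Equiv.swap a b) * x) = x := fun x => by
    rw [← mul_assoc, K5, Equiv.swap_mul_self, hP1, one_mul]
  -- T/A commutation (chained)
  have hTbaAc' : ∀ x : H, T b a * (A c * x) = A c * (T b a * x) := fun x => by
    rw [← mul_assoc, K7b b a c hba hbc hac, mul_assoc]
  have hAbTac' : ∀ x : H, A b * (T a c * x) = T a c * (A b * x) := fun x => by
    rw [← mul_assoc, ← K7b a c b hac hab hcb, mul_assoc]
  have hAcTab' : ∀ x : H, A c * (T a b * x) = T a b * (A c * x) := fun x => by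
    rw [← mul_assoc, ← K7b a b c hab hac hbc, mul_assoc]
  -- pentagon (chained)
  have hPent' : ∀ x : H, T b a * (T b c * (T a c * x)) = T a c * (T b a * x) := fun x => by
    simp only [← mul_assoc]
    rw [← K2 b a c hba hbc hac]
  -- K4 (chained)
  have hK4bc' : ∀ x : H,
      T b c * (A b * (T c b * x)) = ζ * (A b * (A c * (P (Equiv.swap b c) * x))) := fun x => by
    simp only [← mul_assoc]; rw [K4 b c hbc]
  have hK4ba' : ∀ x : H,
      T b a * (A b * (T a b * x)) = ζ * (A b * (A a * (P (Equiv.swap a b) * x))) := fun x => by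
    simp only [← mul_assoc]; rw [K4 b a hba, Equiv.swap_comm b a]
  -- K3-derived (chained)
  have hTcb : T c b = (A c)⁻¹ * (A b * T b c * A c) * (A b)⁻¹ := by
    rw [K3 b c hbc]; group
  have k3c' : ∀ x : H,
      A b * (A b * (T c b * (A c * (A c * x)))) =
        A c * (A c * (T b c * (A b * (A b * x)))) := fun x => by
    rw [hTcb, hAinv b, hAinv c]
    simp only [mul_assoc]
    simp only [hcb', hc b, hc c]
  -- the element B
  set B : H := T b a * (A b * (A b * P s)) with hB
  -- inverse of T a b
  have hTab : T a b = ζ * A a * A b * P (Equiv.swap a b) * (T b a)⁻¹ * (A a)⁻¹ := by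
    rw [← K4 a b hab]; group
  have hPabinv : (P (Equiv.swap a b))⁻¹ = P (Equiv.swap a b) :=
    inv_eq_of_mul_eq_one_right (by rw [K5, Equiv.swap_mul_self, hP1])
  have hTabinv : (T a b)⁻¹ =
      A a * (T b a * (P (Equiv.swap a b) * (A b * (A b * (A a * (A a * ζ⁻¹)))))) := by
    rw [hTab]
    simp only [mul_inv_rev, inv_inv]
    rw [hPabinv, hAinv b, hAinv a]
    simp only [mul_assoc]
  -- Step 1
  have L1 : A a ^ 2 * (T a b)⁻¹ * A b * P (Equiv.swap b c) = ζ⁻¹ * B := by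
    rw [pow_two, hTabinv]
    simp only [mul_assoc]
    rw [hc a]
    rw [hPabAb', hPabAb', hPabAa', hPabAa']
    rw [hzig', hzig', hzig', hzig', hzig', hzig']
    rw [hPabAb']
    rw [K5 (Equiv.swap a b) (Equiv.swap b c), ← hs]
    rw [hba', hba']
    rw [hc a]
  -- Step 2: powers of B
  have hBB : ∀ x : H, B * (B * x) =
      A c * (A c * (T b a * (T b c * (A b * (A b * (P (s * s) * x)))))) := fun x => by
    rw [hB]
    simp only [mul_assoc]
    rw [hPsTba', hPsAb', hPsAb', hPsPs']
    rw [k3c']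
    rw [hTbaAc', hTbaAc']
  have hB3 : ∀ x : H, B * (B * (B * x)) =
      A c * (A c * (T a c * (T b a * (A b * (A b * (A a * (A a * x))))))) := fun x => by
    rw [hBB (B * x), hB]
    simp only [mul_assoc]
    rw [hPs2Tba', hPs2Ab', hPs2Ab', hPs2Ps']
    rw [hAbTac', hAbTac']
    rw [hPent']
  have key : ∀ x : H, B * (B * (B * (B * (B * x)))) = ζ * (ζ * x) := fun x => by
    rw [hBB (B * (B * (B * x))), hB3 x]
    rw [hPs2Ac', hPs2Ac', hPs2Tac', hPs2Tba', hPs2Ab', hPs2Ab', hPs2Aa', hPs2Aa']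
    rw [hc b]
    rw [hK4bc']
    rw [hzg' (T b a), hzg' (A c), hzg' (A c)]
    rw [hPbcTac', hPbcAa', hPbcAa', hPbcAc', hPbcAc', hPbcPs2']
    rw [hAcTab']
    rw [hK4ba']
    rw [hzg' (A c), hzg' (A c)]
    rw [hPabAc', hPabAa', hPabAa', hPabAb', hPabAb', hPabPab']
    simp only [hba', hca', hcb', hc a, hc b, hc c]
  have hB5 : B ^ 5 = ζ * ζ := by
    have k := key 1
    rw [mul_one, mul_one] at k
    calc B ^ 5 = B * (B * (B * (B * B))) := by
          rw [pow_succ, pow_succ, pow_succ, pow_succ, pow_one]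
          simp only [mul_assoc]
    _ = ζ * ζ := k
  -- conclusion
  rw [L1]
  have hcz : Commute (ζ⁻¹) B := Commute.inv_left ((hζc B).symm)
  rw [hcz.mul_pow]
  rw [hB5]
  group
end

section
/- For any mutually distinct a, b, c ∈ I, one has (A(a)² · T(a,b)⁻¹ · A(b) · P(swap(b,c)))² = A(a) · A(b) · T(b,a)⁻¹ · T(a,c)⁻¹ · A(c) in H. -/
/-- for any mutually distinct `a, b, c ∈ I`,
`(A(a)²·T(a,b)⁻¹·A(b)·P(swap(b,c)))² = A(a)·A(b)·T(b,a)⁻¹·T(a,c)⁻¹·A(c)`. -/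
theorem betaHat_alphaHat_star_squared
    {H : Type*} [Group H] (ζ : H) (hζ : ζ ∈ Subgroup.center H)
    (A : Qx → H) (T : Qx → Qx → H) (P : Equiv.Perm Qx → H)
    (K1 : ∀ j, A j ^ 3 = 1)
    (K2 : ∀ j k ℓ, j ≠ k → j ≠ ℓ → k ≠ ℓ → T k ℓ * T j k = T j k * T j ℓ * T k ℓ)
    (K3 : ∀ j k, j ≠ k → A j * T j k * A k = A k * T k j * A j)
    (K4 : ∀ j k, j ≠ k → T j k * A j * T k j = ζ * A j * A k * P (Equiv.swap j k))
    (K5 : ∀ σ τ, P σ * P τ = P (σ * τ))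
    (K6a : ∀ (σ : Equiv.Perm Qx) (j), P σ * A j = A (σ j) * P σ)
    (K6b : ∀ (σ : Equiv.Perm Qx) (j k), j ≠ k → P σ * T j k = T (σ j) (σ k) * P σ)
    (K7a : ∀ j k l m, j ≠ k → j ≠ l → j ≠ m → k ≠ l → k ≠ m → l ≠ m →
      T j k * T l m = T l m * T j k)
    (K7b : ∀ j k l, j ≠ k → j ≠ l → k ≠ l → T j k * A l = A l * T j k)
    (K7c : ∀ j k, j ≠ k → A j * A k = A k * A j)
    (a b c : Qx) (hab : a ≠ b) (hac : a ≠ c) (hbc : b ≠ c) :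
    (A a ^ 2 * (T a b)⁻¹ * A b * P (Equiv.swap b c)) ^ 2
      = A a * A b * (T b a)⁻¹ * (T a c)⁻¹ * A c := by
  have hσa : Equiv.swap b c a = a := Equiv.swap_apply_of_ne_of_ne hab hac
  have hσb : Equiv.swap b c b = c := Equiv.swap_apply_left b c
  have hP1 : P 1 = 1 := by
    have h := K5 1 1
    rw [one_mul] at h
    exact mul_left_cancel (a := P 1) (by rw [h, mul_one])
  have hPP : P (Equiv.swap b c) * P (Equiv.swap b c) = 1 := by
    rw [K5, Equiv.swap_mul_self, hP1]
  have hPa : P (Equiv.swap b c) * A a = A a * P (Equiv.swap b c) := by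
    rw [K6a, hσa]
  have hPb : P (Equiv.swap b c) * A b = A c * P (Equiv.swap b c) := by
    rw [K6a, hσb]
  have hT : P (Equiv.swap b c) * T a b = T a c * P (Equiv.swap b c) := by
    have h := K6b (Equiv.swap b c) a b hab
    rwa [hσa, hσb] at h
  have hPT : P (Equiv.swap b c) * (T a b)⁻¹ = (T a c)⁻¹ * P (Equiv.swap b c) := by
    calc P (Equiv.swap b c) * (T a b)⁻¹
        = (T a c)⁻¹ * (T a c * P (Equiv.swap b c)) * (T a b)⁻¹ := by group
      _ = (T a c)⁻¹ * (P (Equiv.swap b c) * T a b) * (T a b)⁻¹ := by rw [hT]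
      _ = (T a c)⁻¹ * P (Equiv.swap b c) := by group
  have hcomm : A a * A b = A b * A a := K7c a b hab
  have hTba : (T b a)⁻¹ = A a * (A b)⁻¹ * (T a b)⁻¹ * (A a)⁻¹ * A b := by
    have h := K3 a b hab
    have h2 : T b a = (A b)⁻¹ * (A a * T a b * A b) * (A a)⁻¹ := by
      rw [h]; group
    rw [h2]; group
  have hAexp : (A a)⁻¹ = A a * A a := by
    rw [inv_eq_iff_mul_eq_one, ← mul_assoc, ← pow_three']
    exact K1 a
  have hPa' : ∀ w : H, P (Equiv.swap b c) * (A a * w)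
      = A a * (P (Equiv.swap b c) * w) := fun w => by
    rw [← mul_assoc, hPa, mul_assoc]
  have hPb' : ∀ w : H, P (Equiv.swap b c) * (A b * w)
      = A c * (P (Equiv.swap b c) * w) := fun w => by
    rw [← mul_assoc, hPb, mul_assoc]
  have hPT' : ∀ w : H, P (Equiv.swap b c) * ((T a b)⁻¹ * w)
      = (T a c)⁻¹ * (P (Equiv.swap b c) * w) := fun w => by
    rw [← mul_assoc, hPT, mul_assoc]
  have hcomm' : ∀ w : H, A b * (A a * w) = A a * (A b * w) := fun w => by
    rw [← mul_assoc, ← hcomm, mul_assoc]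
  simp only [pow_two, hTba, hAexp, mul_assoc, hPa', hPb', hPT', hPP, mul_one,
    hcomm', mul_inv_cancel_left]
end

section
/- For any distinct j, k ∈ I, one has T(j,k)⁻¹ · A(j) · A(k) = ζ⁻¹ · A(j) · P(swap(j,k)) · T(j,k) and T(j,k)⁻¹ · A(j)² · A(k) = A(j)² · A(k) · T(k,j)⁻¹ in H. -/
/-- for any distinct `j, k ∈ I`, one has
`T(j,k)⁻¹·A(j)·A(k) = ζ⁻¹·A(j)·P(swap(j,k))·T(j,k)` and
`T(j,k)⁻¹·A(j)²·A(k) = A(j)²·A(k)·T(k,j)⁻¹`. -/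
theorem lifted_Kashaev_variants_one
    {H : Type*} [Group H] (ζ : H) (hζ : ζ ∈ Subgroup.center H)
    (A : Qx → H) (T : Qx → Qx → H) (P : Equiv.Perm Qx → H)
    (K1 : ∀ j, A j ^ 3 = 1)
    (K2 : ∀ j k ℓ, j ≠ k → j ≠ ℓ → k ≠ ℓ → T k ℓ * T j k = T j k * T j ℓ * T k ℓ)
    (K3 : ∀ j k, j ≠ k → A j * T j k * A k = A k * T k j * A j)
    (K4 : ∀ j k, j ≠ k → T j k * A j * T k j = ζ * A j * A k * P (Equiv.swap j k))
    (K5 : ∀ σ τ, P σ * P τ = P (σ * τ))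
    (K6a : ∀ (σ : Equiv.Perm Qx) (j), P σ * A j = A (σ j) * P σ)
    (K6b : ∀ (σ : Equiv.Perm Qx) (j k), j ≠ k → P σ * T j k = T (σ j) (σ k) * P σ)
    (K7a : ∀ j k l m, j ≠ k → j ≠ l → j ≠ m → k ≠ l → k ≠ m → l ≠ m →
      T j k * T l m = T l m * T j k)
    (K7b : ∀ j k l, j ≠ k → j ≠ l → k ≠ l → T j k * A l = A l * T j k)
    (K7c : ∀ j k, j ≠ k → A j * A k = A k * A j)
    (j k : Qx) (hjk : j ≠ k) :
    (T j k)⁻¹ * A j * A k = ζ⁻¹ * A j * P (Equiv.swap j k) * T j k ∧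
    (T j k)⁻¹ * A j ^ 2 * A k = A j ^ 2 * A k * (T k j)⁻¹ := by
  set s := Equiv.swap j k with hs
  have hcinv : ∀ g : H, g * ζ⁻¹ = ζ⁻¹ * g := by
    intro g
    have := Subgroup.mem_center_iff.mp hζ g
    calc g * ζ⁻¹ = ζ⁻¹ * (ζ * g) * ζ⁻¹ := by group
      _ = ζ⁻¹ * (g * ζ) * ζ⁻¹ := by rw [← this]
      _ = ζ⁻¹ * g := by group
  have P1 : P 1 = 1 := by
    have h := K5 1 1
    rw [one_mul] at h
    exact mul_left_cancel (a := P 1) (by rw [h, mul_one])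
  have hPs : P s * P s = 1 := by
    rw [K5, hs, Equiv.swap_mul_self, P1]
  have hPT : P s * T k j = T j k * P s := by
    have h := K6b s k j (Ne.symm hjk)
    rwa [hs, Equiv.swap_apply_right, Equiv.swap_apply_left, ← hs] at h
  have hTkj : T k j * P s = P s * T j k := by
    calc T k j * P s = (P s * P s) * (T k j * P s) := by rw [hPs]; group
      _ = P s * (P s * T k j) * P s := by group
      _ = P s * (T j k * P s) * P s := by rw [hPT]
      _ = P s * T j k * (P s * P s) := by group
      _ = P s * T j k := by rw [hPs]; group
  have k4 := K4 j k hjk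
  have h1 : A j * A k = ζ⁻¹ * (T j k * A j * T k j) * P s := by
    rw [k4]
    have : ζ⁻¹ * (ζ * A j * A k * P s) * P s = A j * A k * (P s * P s) := by group
    rw [this, hPs, mul_one]
  constructor
  · calc (T j k)⁻¹ * A j * A k
        = (T j k)⁻¹ * (A j * A k) := by group
      _ = (T j k)⁻¹ * (ζ⁻¹ * (T j k * A j * T k j) * P s) := by rw [h1]
      _ = (T j k)⁻¹ * ζ⁻¹ * ((T j k * A j) * (T k j * P s)) := by group
      _ = ζ⁻¹ * (T j k)⁻¹ * ((T j k * A j) * (T k j * P s)) := by rw [hcinv]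
      _ = ζ⁻¹ * (T j k)⁻¹ * ((T j k * A j) * (P s * T j k)) := by rw [hTkj]
      _ = ζ⁻¹ * A j * P s * T j k := by group
  · have hA2 : A j ^ 2 = (A j)⁻¹ := by
      have h := K1 j
      rw [pow_succ] at h
      exact eq_inv_of_mul_eq_one_left h
    have hcomm := K7c j k hjk
    have k3 := K3 j k hjk
    have hcomm' : A k * (A j)⁻¹ = (A j)⁻¹ * A k := by
      calc A k * (A j)⁻¹ = (A j)⁻¹ * (A j * A k) * (A j)⁻¹ := by group
        _ = (A j)⁻¹ * (A k * A j) * (A j)⁻¹ := by rw [hcomm]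
        _ = (A j)⁻¹ * A k := by group
    have hmain : A j ^ 2 * A k * T k j = T j k * (A j ^ 2 * A k) := by
      rw [hA2]
      calc (A j)⁻¹ * A k * T k j
          = (A j)⁻¹ * (A k * T k j * A j) * (A j)⁻¹ := by group
        _ = (A j)⁻¹ * (A j * T j k * A k) * (A j)⁻¹ := by rw [← k3]
        _ = T j k * (A k * (A j)⁻¹) := by group
        _ = T j k * ((A j)⁻¹ * A k) := by rw [hcomm']
    calc (T j k)⁻¹ * A j ^ 2 * A k
        = (T j k)⁻¹ * (A j ^ 2 * A k * T k j) * (T k j)⁻¹ := by group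
      _ = (T j k)⁻¹ * (T j k * (A j ^ 2 * A k)) * (T k j)⁻¹ := by rw [hmain]
      _ = A j ^ 2 * A k * (T k j)⁻¹ := by group
end

section
/- Let G be a group, N a normal subgroup of G, S a subset of G generating G, and P a subset of N generating N. Suppose that all elements of P have the same image in the abelianization N/⁅N,N⁆, and that for every s ∈ S and every p ∈ P there exists p' ∈ P with s·p·s⁻¹·p'⁻¹ ∈ ⁅N,N⁆. Then the image of N in the quotient G/⁅N,N⁆ is contained in the center of G/⁅N,N⁆; in particular, G/⁅N,N⁆ is a central extension of G/N by N/⁅N,N⁆. -/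
/-- Let `G` be a group, `N` a normal subgroup, `S` a generating subset of
`G`, and `P ⊆ N` a generating subset of `N`.  Suppose all elements of `P` have the same
image in the abelianization `N ⧸ ⁅N,N⁆` (i.e. `p·p'⁻¹ ∈ ⁅N,N⁆` for all `p, p' ∈ P`), and
for every `s ∈ S` and `p ∈ P` there is `p' ∈ P` with `s·p·s⁻¹·p'⁻¹ ∈ ⁅N,N⁆`.  Then the
image of `N` in `G ⧸ ⁅N,N⁆` is contained in the center of `G ⧸ ⁅N,N⁆`; in particular
`G ⧸ ⁅N,N⁆` is a central extension of `G ⧸ N` by `N ⧸ ⁅N,N⁆`: the natural projection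
`G ⧸ ⁅N,N⁆ →* G ⧸ N` is surjective with kernel the (central) image of `N`, and this
kernel is isomorphic to the abelianization `N ⧸ ⁅N,N⁆`. -/
theorem relativeAbelianization_is_central_extension
    {G : Type*} [Group G] (N : Subgroup G) [N.Normal]
    (S : Set G) (hS : Subgroup.closure S = ⊤)
    (P : Set G) (hPN : P ⊆ (N : Set G)) (hPgen : Subgroup.closure P = N)
    (hsame : ∀ p ∈ P, ∀ p' ∈ P, p * p'⁻¹ ∈ (⁅N, N⁆ : Subgroup G))
    (hconj : ∀ s ∈ S, ∀ p ∈ P, ∃ p' ∈ P, s * p * s⁻¹ * p'⁻¹ ∈ (⁅N, N⁆ : Subgroup G)) :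
    N.map (QuotientGroup.mk' (⁅N, N⁆ : Subgroup G))
        ≤ Subgroup.center (G ⧸ (⁅N, N⁆ : Subgroup G)) ∧
    (∃ q : G ⧸ (⁅N, N⁆ : Subgroup G) →* G ⧸ N,
      (∀ g : G, q (QuotientGroup.mk g) = QuotientGroup.mk g) ∧
      Function.Surjective q ∧
      q.ker = N.map (QuotientGroup.mk' (⁅N, N⁆ : Subgroup G))) ∧
    Nonempty ((N.map (QuotientGroup.mk' (⁅N, N⁆ : Subgroup G))) ≃*
      (↥N ⧸ ((⁅N, N⁆ : Subgroup G).subgroupOf N))) := by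
  set K : Subgroup G := ⁅N, N⁆ with hK
  have hKN : K ≤ N := Subgroup.commutator_le_left N N
  -- centrality
  have hcomm : ∀ p ∈ P, ∀ g : G,
      (g : G ⧸ K) * (p : G ⧸ K) = (p : G ⧸ K) * (g : G ⧸ K) := by
    intro p hp g
    have hg : g ∈ Subgroup.closure S := by rw [hS]; trivial
    induction hg using Subgroup.closure_induction with
    | mem s hs =>
      obtain ⟨p', hp', hsp⟩ := hconj s hs p hp
      have h2 : p' * p⁻¹ ∈ K := hsame p' hp' p hp
      have h3 : s * p * s⁻¹ * p⁻¹ ∈ K := by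
        have := mul_mem hsp h2
        simpa [mul_assoc] using this
      have : ((s * p * s⁻¹ * p⁻¹ : G) : G ⧸ K) = 1 :=
        (QuotientGroup.eq_one_iff _).2 h3
      have h4 : (s : G ⧸ K) * p * (s : G ⧸ K)⁻¹ * (p : G ⧸ K)⁻¹ = 1 := by
        simpa using this
      rw [mul_inv_eq_one] at h4
      calc (s : G ⧸ K) * p = ((s : G ⧸ K) * p * (s : G ⧸ K)⁻¹) * s := by group
        _ = (p : G ⧸ K) * s := by rw [h4]
    | one => simp
    | mul a b _ _ ha hb =>
      rw [QuotientGroup.mk_mul]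
      exact Commute.mul_left ha hb
    | inv a _ ha =>
      rw [QuotientGroup.mk_inv]
      exact Commute.inv_left ha
  have hcenter : N.map (QuotientGroup.mk' K) ≤ Subgroup.center (G ⧸ K) := by
    have hmap : N.map (QuotientGroup.mk' K)
        = (Subgroup.closure P).map (QuotientGroup.mk' K) := by rw [hPgen]
    rw [hmap, MonoidHom.map_closure, Subgroup.closure_le]
    rintro x ⟨p, hp, rfl⟩
    refine SetLike.mem_coe.2 (Subgroup.mem_center_iff.2 fun g => ?_)
    induction g using QuotientGroup.induction_on with
    | H a => exact hcomm p hp a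
  refine ⟨hcenter, ?_, ?_⟩
  · refine ⟨QuotientGroup.map K N (MonoidHom.id G) hKN, fun g => rfl, ?_, ?_⟩
    · intro x
      induction x using QuotientGroup.induction_on with
      | H a => exact ⟨a, rfl⟩
    · ext x
      induction x using QuotientGroup.induction_on with
      | H a =>
        simp only [MonoidHom.mem_ker, QuotientGroup.map_mk, MonoidHom.id_apply,
          QuotientGroup.eq_one_iff]
        show (a : G ⧸ N) = 1 ↔ _
        rw [QuotientGroup.eq_one_iff]
        constructor
        · intro ha; exact ⟨a, ha, rfl⟩
        · rintro ⟨b, hb, hab⟩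
          have : (b : G ⧸ K) = (a : G ⧸ K) := hab
          rw [QuotientGroup.eq] at this
          have : b⁻¹ * a ∈ N := hKN this
          simpa using mul_mem hb this
  · -- isomorphism between image of N and N ⧸ K.subgroupOf N
    let f : ↥N →* G ⧸ K := (QuotientGroup.mk' K).comp N.subtype
    have hker : f.ker = K.subgroupOf N := by
      ext n
      simp [f, MonoidHom.mem_ker, QuotientGroup.eq_one_iff, Subgroup.mem_subgroupOf]
    have hrange : f.range = N.map (QuotientGroup.mk' K) := by
      ext x
      constructor
      · rintro ⟨n, rfl⟩; exact ⟨n, n.2, rfl⟩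
      · rintro ⟨a, ha, rfl⟩; exact ⟨⟨a, ha⟩, rfl⟩
    exact ⟨((MulEquiv.subgroupCongr hrange.symm).trans
      (QuotientGroup.quotientKerEquivRange f).symm).trans
      (QuotientGroup.quotientMulEquivOfEq hker)⟩
end
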